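/- arXiv:1404.0715 — 2 statements merged into one kernel-verified Lean document; each statement's English description precedes it below -/
import Mathlib

section
/- Let g be a finite-dimensional Lie algebra with sl2-triple {e,h=2x,f} and nondegenerate invariant symmetric bilinear form. The spaces g^f and g^e are nondegenerately paired by the bilinear form, and for any a ∈ g the projection of a onto g^f along [e,g] equals Σ_j (a|q^j) q_j, where {q_j} is a basis of g^f and {q^j} the dual basis of g^e. -/
open Module Polynomial

lemma aux_nilp {K V : Type*} [Field K] [CharZero K] [AddCommGroup V] [Module K V]
    [FiniteDimensional K V] (X A : Module.End K V) (hXA : X * A - A * X = A) :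
    IsNilpotent A := by
  by_contra hA
  have hpow : ∀ k : ℕ, A ^ k ≠ 0 := fun k h => hA ⟨k, h⟩
  set D : Module.End K (Module.End K V) :=
    LinearMap.mulLeft K X - LinearMap.mulRight K X with hD
  have hDk : ∀ k : ℕ, D (A ^ k) = (k : K) • (A ^ k) := by
    intro k
    induction k with
    | zero => simp [hD]
    | succ k ih =>
      have e1 : X * A ^ (k+1) - A ^ (k+1) * X
          = (X * A ^ k - A ^ k * X) * A + A ^ k * (X * A - A * X) := by noncomm_ring
      have e2 : D (A ^ (k+1)) = X * A ^ (k+1) - A ^ (k+1) * X := by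
        simp [hD, LinearMap.mulLeft_apply, LinearMap.mulRight_apply]
      have e3 : D (A ^ k) = X * A ^ k - A ^ k * X := by
        simp [hD, LinearMap.mulLeft_apply, LinearMap.mulRight_apply]
      rw [e2, e1, hXA, ← e3, ih]
      rw [smul_mul_assoc, ← pow_succ]
      push_cast
      rw [add_smul, one_smul]
  have hei : ∀ k : Fin (finrank K (Module.End K V) + 1),
      D.HasEigenvector ((k : K) + 1) (A ^ ((k : ℕ) + 1)) := by
    intro k
    constructor
    · rw [Module.End.mem_eigenspace_iff, hDk]
      push_cast; ring_nf
    · exact hpow _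
  have hli := D.eigenvectors_linearIndependent'
      (fun k : Fin (finrank K (Module.End K V) + 1) => ((k : K) + 1))
      (fun i j hij => by
        have : ((i : ℕ) : K) = ((j : ℕ) : K) := by
          field_simp at hij; exact_mod_cast add_right_cancel hij
        exact Fin.ext (by exact_mod_cast this))
      _ hei
  have := hli.fintype_card_le_finrank
  simp at this

section
variable {K V : Type*} [Field K] [CharZero K] [AddCommGroup V] [Module K V]
    [FiniteDimensional K V] (E F H : Module.End K V)

lemma aux_I1 (hEF : E * F = F * E + H) (hHF : H * F = F * H - (2:K) • F) :
    ∀ m : ℕ, E * F ^ (m+1)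
      = F ^ (m+1) * E + ((m:K)+1) • (F ^ m * H) - ((m:K)*((m:K)+1)) • F ^ m := by
  intro m
  induction m with
  | zero => simpa using hEF
  | succ m ih =>
    calc E * F ^ (m+2) = (E * F ^ (m+1)) * F := by rw [pow_succ, ← mul_assoc]
      _ = (F^(m+1)*E + ((m:K)+1) • (F^m * H) - ((m:K)*((m:K)+1)) • F^m) * F := by rw [ih]
      _ = F^(m+1)*(E*F) + ((m:K)+1) • (F^m * (H*F)) - ((m:K)*((m:K)+1)) • (F^m * F) := by
          rw [sub_mul, add_mul, smul_mul_assoc, smul_mul_assoc, mul_assoc, mul_assoc]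
      _ = F^(m+1)*(F*E) + F^(m+1)*H + ((m:K)+1) • (F^m * (F*H))
            - (((m:K)+1) * 2) • (F^m * F) - ((m:K)*((m:K)+1)) • (F^m * F) := by
          rw [hEF, hHF, mul_add, mul_sub, smul_sub, mul_smul_comm, smul_smul]
          abel
      _ = F ^ (m+2) * E + (((m:K)+1)+1) • (F ^ (m+1) * H)
            - (((m:K)+1)*(((m:K)+1)+1)) • F ^ (m+1) := by
          simp only [pow_succ, mul_assoc]
          match_scalars <;> ring
      _ = _ := by push_cast; ring_nf
end

section
variable {K V : Type*} [Field K] [CharZero K] [AddCommGroup V] [Module K V]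
    [FiniteDimensional K V] {E F H : Module.End K V}

omit [CharZero K] [FiniteDimensional K V] in
lemma aux_I2 (hHF : H * F = F * H - (2:K) • F) :
    ∀ m : ℕ, H * F ^ m = F ^ m * H - (2*(m:K)) • F ^ m := by
  intro m
  induction m with
  | zero => simp
  | succ m ih =>
    calc H * F ^ (m+1) = (H * F ^ m) * F := by rw [pow_succ, ← mul_assoc]
      _ = (F ^ m * H - (2*(m:K)) • F ^ m) * F := by rw [ih]
      _ = F ^ m * (H * F) - (2*(m:K)) • (F ^ m * F) := by
          rw [sub_mul, smul_mul_assoc, mul_assoc]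
      _ = _ := by
          rw [hHF, mul_sub, mul_smul_comm]
          simp only [pow_succ, mul_assoc]
          match_scalars <;> push_cast <;> ring

lemma aux_C1 (hEF : E * F = F * E + H) (hHF : H * F = F * H - (2:K) • F)
    (hHE : H * E = E * H + (2:K) • E) :
    ∀ r : ℕ, ∀ v : V, E v = 0 → (F ^ r) v = 0 →
      (aeval H (∏ k ∈ Finset.range r, (X - C (k:K)))) v = 0 := by
  intro r
  induction r with
  | zero => intro v _ h0; simpa using h0
  | succ r ih =>
    intro v hvE hvF
    set w := H v - (r:K) • v with hw
    have hEH : E (H v) = 0 := by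
      have h := DFunLike.congr_fun hHE v
      simp only [Module.End.mul_apply, LinearMap.add_apply, LinearMap.smul_apply, hvE,
        map_zero] at h
      simpa using h.symm
    have hEw : E w = 0 := by
      rw [hw, map_sub, map_smul, hvE, hEH, smul_zero, sub_zero]
    have hFw : (F ^ r) w = 0 := by
      have h := DFunLike.congr_fun (aux_I1 E F H hEF hHF r) v
      simp only [Module.End.mul_apply, LinearMap.add_apply, LinearMap.sub_apply,
        LinearMap.smul_apply, hvE, map_zero, hvF] at h
      -- h : 0 = 0 + (r+1) • F^r (H v) - r(r+1) • F^r v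
      have h' : ((r:K)+1) • ((F ^ r) (H v) - (r:K) • ((F ^ r) v)) = 0 := by
        rw [smul_sub, smul_smul, mul_comm ((r:K)+1) (r:K)]
        rw [zero_add] at h
        exact h.symm
      have hne : ((r:K)+1) ≠ 0 := Nat.cast_add_one_ne_zero r
      rcases smul_eq_zero.mp h' with h'' | h''
      · exact absurd h'' hne
      · rw [hw, map_sub, map_smul]
        exact h''
    have hstep : (aeval H (∏ k ∈ Finset.range (r+1), (X - C (k:K)))) v
        = (aeval H (∏ k ∈ Finset.range r, (X - C (k:K)))) w := by
      rw [Finset.prod_range_succ, map_mul, Module.End.mul_apply]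
      congr 1
      simp [hw, Module.algebraMap_end_apply, Nat.cast_smul_eq_nsmul]
    rw [hstep]
    exact ih w hEw hFw
end

section
variable {K V : Type*} [Field K] [CharZero K] [AddCommGroup V] [Module K V]
    [FiniteDimensional K V] {E F H : Module.End K V}

lemma aux_C2 (hEF : E * F = F * E + H) (hHF : H * F = F * H - (2:K) • F)
    (hHE : H * E = E * H + (2:K) • E) {N : ℕ} (hN : F ^ N = 0) :
    ∀ t m : ℕ, 1 ≤ m → N ≤ m + t → ∀ v : V, E v = 0 → v ∈ LinearMap.range (F ^ m) →
      (aeval H (∏ k ∈ Finset.range t, (X + C ((m:K)+1+(k:K))))) v = 0 := by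
  intro t
  induction t with
  | zero =>
    intro m _ hNm v _ hv
    obtain ⟨w, rfl⟩ := hv
    have hFm : (F : Module.End K V) ^ m = 0 := by
      rw [← Nat.sub_add_cancel (by omega : N ≤ m), pow_add, hN, mul_zero]
    simp [hFm]
  | succ t ih =>
    intro m hm hNm v hvE hv
    obtain ⟨w, hwv⟩ := hv
    set v' := H v + ((m:K)+1) • v with hv'
    have hEH : E (H v) = 0 := by
      have h := DFunLike.congr_fun hHE v
      simp only [Module.End.mul_apply, LinearMap.add_apply, LinearMap.smul_apply, hvE,
        map_zero, smul_zero, add_zero] at h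
      simpa using h.symm
    have hEv' : E v' = 0 := by
      rw [hv', map_add, map_smul, hvE, hEH, smul_zero, add_zero]
    -- v' ∈ range (F ^ (m+1))
    have hv'mem : v' ∈ LinearMap.range (F ^ (m+1)) := by
      obtain ⟨s, rfl⟩ : ∃ s, m = s + 1 := ⟨m - 1, by omega⟩
      refine ⟨(-(((s:K)+1))⁻¹) • E w, ?_⟩
      have hmK : ((s:K)+1) ≠ 0 := Nat.cast_add_one_ne_zero s
      set A := (F ^ (s+1)) (E w) with hA
      set Bv := (F ^ s) (H w) with hB
      set Cv := (F ^ s) w with hC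
      have h1 := DFunLike.congr_fun (aux_I1 E F H hEF hHF s) w
      simp only [Module.End.mul_apply, LinearMap.add_apply, LinearMap.sub_apply,
        LinearMap.smul_apply] at h1
      rw [← hA, ← hB, ← hC, hwv, hvE] at h1
      -- h1 : 0 = A + (s+1)•Bv - (s*(s+1))•Cv
      have h1' : A = ((s:K)*((s:K)+1)) • Cv - ((s:K)+1) • Bv := by
        linear_combination (norm := module) -h1
      have hvC : F Cv = v := by rw [hC, ← hwv, pow_succ', Module.End.mul_apply]
      have hFA : F A = ((s:K)*((s:K)+1)) • v - ((s:K)+1) • F Bv := by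
        rw [h1', map_sub, map_smul, map_smul, hvC]
      have h2 := DFunLike.congr_fun (aux_I2 hHF (s+1)) w
      simp only [Module.End.mul_apply, LinearMap.sub_apply, LinearMap.smul_apply] at h2
      rw [hwv] at h2
      have hFB' : (F ^ (s+1)) (H w) = F Bv := by rw [hB, pow_succ', Module.End.mul_apply]
      rw [hFB'] at h2
      -- h2 : H v = F Bv - (2*(s+1))•v
      have hFB : F Bv = H v + (2*((s:K)+1)) • v := by
        push_cast at h2
        linear_combination (norm := module) -h2
      have hgoal : (F ^ (s+1+1)) (E w) = F A := by rw [hA, pow_succ', Module.End.mul_apply]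
      rw [map_smul, hgoal, hFA, hFB, hv']
      push_cast
      match_scalars <;> (field_simp; try ring)
    have key := ih (m+1) (by omega) (by omega) v' hEv' hv'mem
    have hprod : (∏ k ∈ Finset.range t, (X + C (((m+1:ℕ):K)+1+(k:K))))
        = ∏ k ∈ Finset.range t, (X + C ((m:K)+1+((k+1:ℕ):K))) := by
      refine Finset.prod_congr rfl fun k _ => ?_
      push_cast; ring_nf
    rw [hprod] at key
    have hstep : (aeval H (∏ k ∈ Finset.range (t+1), (X + C ((m:K)+1+(k:K))))) v
        = (aeval H (∏ k ∈ Finset.range t, (X + C ((m:K)+1+((k+1:ℕ):K))))) v' := by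
      rw [Finset.prod_range_succ', map_mul, Module.End.mul_apply]
      congr 1
      simp only [hv', map_add, aeval_X, aeval_C, LinearMap.add_apply,
        Module.algebraMap_end_apply]
      module
    rw [hstep]
    exact key
end

section
variable {K V : Type*} [Field K] [CharZero K] [AddCommGroup V] [Module K V]
    [FiniteDimensional K V] {E F H : Module.End K V}

lemma aux_kerim (hEF : E * F = F * E + H) (hHF : H * F = F * H - (2:K) • F)
    (hHE : H * E = E * H + (2:K) • E) (hFnil : IsNilpotent F)
    {v : V} (hvE : E v = 0) (hvF : v ∈ LinearMap.range F) : v = 0 := by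
  obtain ⟨N, hN⟩ := hFnil
  set p1 : Polynomial K := ∏ k ∈ Finset.range N, (X - C (k:K)) with hp1
  set p2 : Polynomial K := ∏ k ∈ Finset.range N, (X + C (((1:ℕ):K)+1+(k:K))) with hp2
  have h1 : (aeval H p1) v = 0 :=
    aux_C1 hEF hHF hHE N v hvE (by rw [hN]; rfl)
  have h2 : (aeval H p2) v = 0 := by
    have := aux_C2 hEF hHF hHE hN N 1 le_rfl (by omega) v hvE (by simpa using hvF)
    exact this
  have hcop : IsCoprime p1 p2 := by
    rw [hp1, hp2]
    apply IsCoprime.prod_left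
    intro i _
    apply IsCoprime.prod_right
    intro j _
    have : X + C (((1:ℕ):K)+1+(j:K)) = X - C (-(((1:ℕ):K)+1+(j:K))) := by
      rw [map_neg, sub_neg_eq_add]
    rw [this]
    apply Polynomial.isCoprime_X_sub_C_of_isUnit_sub
    have : (i:K) - (-(((1:ℕ):K)+1+(j:K))) = ((i + 1 + 1 + j : ℕ) : K) := by
      push_cast; ring
    rw [this]
    have hne : (i + 1 + 1 + j : ℕ) ≠ 0 := by omega
    exact IsUnit.mk0 _ (Nat.cast_ne_zero.mpr hne)
  obtain ⟨a, b, hab⟩ := hcop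
  have := congrArg (fun p => (aeval H p) v) hab
  simp only [map_add, map_mul, map_one, Module.End.mul_apply, LinearMap.add_apply,
    Module.End.one_apply, h1, h2, map_zero, add_zero] at this
  exact this.symm
end

/-- `g^f` and `g^e` are nondegenerately paired by the invariant form,
and for any `a ∈ g` with decomposition `a = a^♯ + [e,b]` (`a^♯ ∈ g^f`), the projection
onto `g^f` along `[e,g]` is `a^♯ = Σ_j (a|q^j) q_j`, where `{q_j}` is a basis of `g^f`
and `{q^j} ⊆ g^e` the dual family with `(q_i | q^j) = δ_{i,j}`. -/
theorem pairing_and_projection_formula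
    {F : Type*} [Field F] [CharZero F]
    {g : Type*} [LieRing g] [LieAlgebra F g] [Module.Finite F g]
    (e x f : g)
    (hxe : ⁅x, e⁆ = e) (hxf : ⁅x, f⁆ = -f) (hef : ⁅e, f⁆ = (2 : F) • x)
    (B : LinearMap.BilinForm F g)
    (hBsymm : ∀ a b : g, B a b = B b a)
    (hBinv : ∀ a b c : g, B ⁅a, b⁆ c = B a ⁅b, c⁆)
    (hBnd : B.Nondegenerate)
    {ι : Type*} [Fintype ι] [DecidableEq ι]
    (qf qe : ι → g)
    (hqf : ∀ j, ⁅f, qf j⁆ = 0)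
    (hqe : ∀ j, ⁅e, qe j⁆ = 0)
    (hspan : Submodule.span F (Set.range qf) = LinearMap.ker (LieAlgebra.ad F g f))
    (hdual : ∀ i j, B (qf i) (qe j) = if i = j then 1 else 0) :
    (∀ p ∈ LinearMap.ker (LieAlgebra.ad F g f),
      (∀ q ∈ LinearMap.ker (LieAlgebra.ad F g e), B p q = 0) → p = 0) ∧
    (∀ q ∈ LinearMap.ker (LieAlgebra.ad F g e),
      (∀ p ∈ LinearMap.ker (LieAlgebra.ad F g f), B p q = 0) → q = 0) ∧
    (∀ a af b : g, ⁅f, af⁆ = 0 → a = af + ⁅e, b⁆ →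
      af = ∑ j, B a (qe j) • qf j) := by
  have : FiniteDimensional F g := ‹Module.Finite F g›
  set adE := LieAlgebra.ad F g e with hadE
  set adF := LieAlgebra.ad F g f with hadF
  set adX := LieAlgebra.ad F g x with hadX
  set Hop : Module.End F g := (2:F) • adX with hHop
  have hbra : ∀ a b : g, LieAlgebra.ad F g ⁅a, b⁆
      = LieAlgebra.ad F g a * LieAlgebra.ad F g b - LieAlgebra.ad F g b * LieAlgebra.ad F g a := by
    intro a b
    letI := LieRing.ofAssociativeRing (A := Module.End F g)
    have := LieHom.map_lie (LieAlgebra.ad F g) a b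
    rw [Ring.lie_def] at this
    exact this
  have hXE : adX * adE - adE * adX = adE := by
    have h := hbra x e
    rw [hxe, ← hadX, ← hadE] at h
    exact h.symm
  have hXF : adX * adF - adF * adX = -adF := by
    have h := hbra x f
    have hnegf : LieAlgebra.ad F g (-f) = -adF := by
      simpa [hadF] using map_neg ((LieAlgebra.ad F g).toLinearMap) f
    rw [hxf, hnegf, ← hadX, ← hadF] at h
    exact h.symm
  have hEF : adE * adF = adF * adE + Hop := by
    have h := hbra e f
    have h2x : LieAlgebra.ad F g ((2:F) • x) = Hop := by
      simpa [hHop, hadX] using map_smul ((LieAlgebra.ad F g).toLinearMap) (2:F) x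
    rw [hef, h2x, ← hadE, ← hadF] at h
    have h' := sub_eq_iff_eq_add.mp h.symm
    rw [h', add_comm]
  have hxf' : adX * adF = adF * adX - adF := by
    have h := sub_eq_iff_eq_add.mp hXF
    rw [h]; abel
  have hxe' : adX * adE = adE * adX + adE := by
    have h := sub_eq_iff_eq_add.mp hXE
    rw [h]; abel
  have hHF : Hop * adF = adF * Hop - (2:F) • adF := by
    rw [hHop, smul_mul_assoc, mul_smul_comm, hxf', smul_sub]
  have hHE : Hop * adE = adE * Hop + (2:F) • adE := by
    rw [hHop, smul_mul_assoc, mul_smul_comm, hxe', smul_add]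
  have hEnil : IsNilpotent adE := aux_nilp adX adE hXE
  have hFnil : IsNilpotent adF := by
    refine aux_nilp (-adX) adF ?_
    rw [neg_mul, mul_neg, sub_neg_eq_add, neg_add_eq_sub, ← neg_sub, hXF, neg_neg]
  -- the two kernel/image lemmas
  have hkerEF : ∀ v : g, adE v = 0 → v ∈ LinearMap.range adF → v = 0 :=
    fun v hv hv' => aux_kerim hEF hHF hHE hFnil hv hv'
  have hkerFE : ∀ v : g, adF v = 0 → v ∈ LinearMap.range adE → v = 0 := by
    intro v hv hv'
    refine aux_kerim (E := adF) (F := adE) (H := -Hop) ?_ ?_ ?_ hEnil hv hv'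
    · rw [hEF]; abel
    · rw [neg_mul, mul_neg, hHE]; abel
    · rw [neg_mul, mul_neg, hHF]; abel
  -- dimension count
  have hdisj1 : LinearMap.ker adE ⊓ LinearMap.range adF = ⊥ := by
    rw [Submodule.eq_bot_iff]
    rintro v ⟨hv1, hv2⟩
    exact hkerEF v (LinearMap.mem_ker.mp hv1) hv2
  have hdisj2 : LinearMap.ker adF ⊓ LinearMap.range adE = ⊥ := by
    rw [Submodule.eq_bot_iff]
    rintro v ⟨hv1, hv2⟩
    exact hkerFE v (LinearMap.mem_ker.mp hv1) hv2
  have hr1 : Module.finrank F (LinearMap.ker adE ⊔ LinearMap.range adF : Submodule F g)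
      = Module.finrank F (LinearMap.ker adE) + Module.finrank F (LinearMap.range adF) := by
    have := Submodule.finrank_sup_add_finrank_inf_eq (LinearMap.ker adE) (LinearMap.range adF)
    rw [hdisj1] at this
    simpa using this
  have hr2 : Module.finrank F (LinearMap.ker adF ⊔ LinearMap.range adE : Submodule F g)
      = Module.finrank F (LinearMap.ker adF) + Module.finrank F (LinearMap.range adE) := by
    have := Submodule.finrank_sup_add_finrank_inf_eq (LinearMap.ker adF) (LinearMap.range adE)
    rw [hdisj2] at this
    simpa using this
  have hle1 : Module.finrank F (LinearMap.ker adE ⊔ LinearMap.range adF : Submodule F g)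
      ≤ Module.finrank F g := Submodule.finrank_le _
  have hle2 : Module.finrank F (LinearMap.ker adF ⊔ LinearMap.range adE : Submodule F g)
      ≤ Module.finrank F g := Submodule.finrank_le _
  have hrnE : Module.finrank F (LinearMap.range adE) + Module.finrank F (LinearMap.ker adE)
      = Module.finrank F g := LinearMap.finrank_range_add_finrank_ker adE
  have hrnF : Module.finrank F (LinearMap.range adF) + Module.finrank F (LinearMap.ker adF)
      = Module.finrank F g := LinearMap.finrank_range_add_finrank_ker adF
  have htop : (LinearMap.ker adF ⊔ LinearMap.range adE : Submodule F g) = ⊤ :=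
    Submodule.eq_top_of_finrank_eq (by omega)
  -- coefficient extraction
  have hcoef : ∀ (c : ι → F) (j : ι), B (∑ i, c i • qf i) (qe j) = c j := by
    intro c j
    rw [map_sum, LinearMap.sum_apply]
    have : ∀ i ∈ Finset.univ, (B (c i • qf i)) (qe j) = if i = j then c i else 0 := by
      intro i _
      rw [map_smul, LinearMap.smul_apply, hdual, smul_eq_mul]
      split <;> simp
    rw [Finset.sum_congr rfl this, Finset.sum_ite_eq' Finset.univ j c]
    simp
  have hqemem : ∀ j, qe j ∈ LinearMap.ker adE := by
    intro j
    rw [LinearMap.mem_ker, hadE, LieAlgebra.ad_apply, hqe]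
  -- Part 1
  have part1 : ∀ p ∈ LinearMap.ker (LieAlgebra.ad F g f),
      (∀ q ∈ LinearMap.ker (LieAlgebra.ad F g e), B p q = 0) → p = 0 := by
    intro p hp hperp
    have hpspan : p ∈ Submodule.span F (Set.range qf) := by rw [hspan]; exact hp
    obtain ⟨c, hc⟩ := (Submodule.mem_span_range_iff_exists_fun F).mp hpspan
    have hc0 : ∀ j, c j = 0 := by
      intro j
      have := hperp (qe j) (hqemem j)
      rw [← hc, hcoef] at this
      exact this
    rw [← hc]
    simp [hc0]
  -- Part 3
  have part3 : ∀ a af b : g, ⁅f, af⁆ = 0 → a = af + ⁅e, b⁆ →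
      af = ∑ j, B a (qe j) • qf j := by
    intro a af b hfaf hdecomp
    have hafker : af ∈ Submodule.span F (Set.range qf) := by
      rw [hspan, LinearMap.mem_ker, LieAlgebra.ad_apply, hfaf]
    obtain ⟨c, hc⟩ := (Submodule.mem_span_range_iff_exists_fun F).mp hafker
    have hBa : ∀ j, B a (qe j) = c j := by
      intro j
      rw [hdecomp, map_add, LinearMap.add_apply]
      have h1 : B ⁅e, b⁆ (qe j) = 0 := by
        rw [← lie_skew e b, map_neg, LinearMap.neg_apply, hBinv, hqe, map_zero, neg_zero]
      rw [h1, add_zero, ← hc, hcoef]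
    rw [← hc]
    refine Finset.sum_congr rfl fun j _ => ?_
    rw [hBa]
  refine ⟨part1, ?_, part3⟩
  -- Part 2
  intro q hq hperp
  apply hBnd.1
  intro a
  rw [hBsymm]
  have ha : a ∈ (LinearMap.ker adF ⊔ LinearMap.range adE : Submodule F g) := by
    rw [htop]; exact Submodule.mem_top
  obtain ⟨p, hp, y, hy, rfl⟩ := Submodule.mem_sup.mp ha
  obtain ⟨b, rfl⟩ := hy
  rw [map_add, LinearMap.add_apply]
  have h1 : B p q = 0 := hperp p hp
  have h2 : B (adE b) q = 0 := by
    rw [hadE, LieAlgebra.ad_apply, ← lie_skew e b, map_neg, LinearMap.neg_apply, hBinv]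
    have : ⁅e, q⁆ = 0 := by
      have := LinearMap.mem_ker.mp hq
      rwa [LieAlgebra.ad_apply] at this
    rw [this, map_zero, neg_zero]
  rw [h1, h2, add_zero]
end

section
/- Let g be a finite-dimensional simple Lie algebra with sl2-triple {e,h=2x,f}, and let g_{1/2} be the 1/2-eigenspace of ad x. Then the skewsymmetric bilinear form ⟨a|b⟩ = -(f|[a,b]) on g_{1/2} is nondegenerate. -/
open LieModule IsSl2Triple
section Aux
variable {F : Type*} [Field F] [CharZero F]
variable {g : Type*} [LieRing g] [LieAlgebra F g] [Module.Finite F g]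
/-- A chain of eigenvectors with distinct eigenvalues must hit zero. -/
lemma chain_terminates (h' : g) (μ c : F) (hc : c ≠ 0) (w : ℕ → g)
    (hw : ∀ j : ℕ, ⁅h', w j⁆ = (μ + c * j) • w j) : ∃ j, w j = 0 := by
  by_contra hcon
  push_neg at hcon
  have hinj : Function.Injective (fun j : ℕ => μ + c * (j : F)) := by
    intro i j hij
    simp only [add_right_inj] at hij
    exact_mod_cast mul_left_cancel₀ hc hij
  have hli := (LieAlgebra.ad F g h').eigenvectors_linearIndependent'
    (fun j : ℕ => μ + c * (j : F)) hinj w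
    (fun j => ⟨Module.End.mem_eigenspace_iff.mpr (by simpa [LieAlgebra.ad_apply] using hw j),
      hcon j⟩)
  exact Module.Finite.not_linearIndependent_of_infinite w hli

variable {h e f : g} (t : IsSl2Triple h e f)

local notation "E" => toEnd F g g e
local notation "Fd" => toEnd F g g f

include t

omit [Module.Finite F g] in
lemma eigen_chain_e {z : g} {μ : F} (hz : ⁅h, z⁆ = μ • z) (j : ℕ) :
    ⁅h, (E ^ j) z⁆ = (μ + 2 * j) • (E ^ j) z := by
  induction j with
  | zero => simpa using hz
  | succ j ih =>
    rw [pow_succ', Module.End.mul_apply, toEnd_apply_apply]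
    rw [leibniz_lie, t.lie_h_e_smul F, smul_lie, ih, lie_smul, ← toEnd_apply_apply F g g e,
      ← Module.End.mul_apply, ← pow_succ']
    rw [← add_smul]
    congr 1
    push_cast
    ring

omit [Module.Finite F g] in
lemma e_pow_f_pow_primitive {u : g} {N : F} (P : t.HasPrimitiveVectorWith u N) :
    ∀ k : ℕ, (∀ j : ℕ, j < k → N - j ≠ 0) →
    ∃ C : F, C ≠ 0 ∧ (E ^ k) ((Fd ^ k) u) = C • u := by
  intro k
  induction k with
  | zero => exact fun _ => ⟨1, one_ne_zero, by simp⟩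
  | succ k ih =>
    intro hN
    obtain ⟨C, hC, hCe⟩ := ih (fun j hj => hN j (hj.trans (Nat.lt_succ_self k)))
    refine ⟨((k : F) + 1) * (N - k) * C, ?_, ?_⟩
    · exact mul_ne_zero (mul_ne_zero (Nat.cast_add_one_ne_zero k) (hN k (Nat.lt_succ_self k))) hC
    · have h2 := P.lie_e_pow_succ_toEnd_f k
      calc (E ^ (k+1)) ((Fd ^ (k+1)) u)
          = (E ^ k) (E ((Fd ^ (k+1)) u)) := by rw [pow_succ, Module.End.mul_apply]
        _ = (E ^ k) (((k + 1 : F) * (N - k)) • (Fd ^ k) u) := by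
            rw [toEnd_apply_apply, h2]
        _ = ((k + 1 : F) * (N - k)) • (E ^ k) ((Fd ^ k) u) := by rw [map_smul]
        _ = (((k : F) + 1) * (N - (k : F)) * C) • u := by rw [hCe, smul_smul]

lemma correction {n : ℕ} {v : g} (hve : ⁅e, v⁆ = 0) :
    ∀ r : ℕ, ∀ c : g, ⁅h, c⁆ = (n : F) • c + v → (E ^ r) ⁅e, c⁆ = 0 →
    ∃ c', ⁅h, c'⁆ = (n : F) • c' + v ∧ ⁅e, c'⁆ = 0 := by
  intro r
  induction r with
  | zero => exact fun c hch h0 => ⟨c, hch, by simpa using h0⟩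
  | succ r ih =>
    intro c hch hr
    have hEc : ⁅h, ⁅e, c⁆⁆ = ((n : F) + 2) • ⁅e, c⁆ := by
      rw [leibniz_lie, t.lie_h_e_smul F, hch, smul_lie, lie_add, lie_smul, hve, add_zero,
        ← add_smul, add_comm]
    by_cases h0 : (E ^ r) ⁅e, c⁆ = 0
    · exact ih c hch h0
    · set u := (E ^ r) ⁅e, c⁆ with hu_def
      have hu_h : ⁅h, u⁆ = (((n : F) + 2) + 2 * r) • u := eigen_chain_e t hEc r
      have hu_e : ⁅e, u⁆ = 0 := by
        have hre : ⁅e, u⁆ = (E ^ (r + 1)) ⁅e, c⁆ := by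
          rw [pow_succ', Module.End.mul_apply, toEnd_apply_apply]
        rw [hre, hr]
      have P : t.HasPrimitiveVectorWith u (((n : F) + 2) + 2 * r) := ⟨h0, hu_h, hu_e⟩
      have hN : ∀ j : ℕ, j < r + 1 → (((n : F) + 2) + 2 * r) - j ≠ 0 := by
        intro j hj
        have hcast : (((n : F) + 2) + 2 * r) - j = ((n + 2 + 2 * r - j : ℕ) : F) := by
          rw [Nat.cast_sub (by omega)]
          push_cast
          ring
        rw [hcast]
        exact Nat.cast_ne_zero.mpr (by omega)
      obtain ⟨C, hC, hCeq⟩ := e_pow_f_pow_primitive t P (r + 1) hN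
      set d := (Fd ^ (r + 1)) u with hd_def
      have hd_h : ⁅h, d⁆ = (n : F) • d := by
        have := P.lie_h_pow_toEnd_f (r + 1)
        rw [hd_def, this]
        congr 1
        push_cast
        ring
      refine ih (c - C⁻¹ • d) ?_ ?_
      · rw [lie_sub, hch, lie_smul, hd_h, smul_comm, smul_sub]
        abel
      · have hed : ⁅e, d⁆ = E d := (toEnd_apply_apply F g g e d).symm
        rw [lie_sub, lie_smul, map_sub, map_smul, hed, ← hu_def]
        have : (E ^ r) (E d) = (E ^ (r + 1)) d := by
          rw [pow_succ, Module.End.mul_apply]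
        rw [this, hd_def, hCeq, smul_smul, inv_mul_cancel₀ hC, one_smul, sub_self]

lemma crux {n : ℕ} {v c : g} (hv : v ≠ 0) (hvh : ⁅h, v⁆ = (n : F) • v) (hve : ⁅e, v⁆ = 0)
    (hch : ⁅h, c⁆ = (n : F) • c + v) (hce : ⁅e, c⁆ = 0) : False := by
  classical
  have P : t.HasPrimitiveVectorWith v (n : F) := ⟨hv, hvh, hve⟩
  set z : ℕ → g := fun k => (Fd ^ k) v with hz_def
  set y : ℕ → g := fun k => (Fd ^ k) c with hy_def
  have hzsucc : ∀ k, z (k + 1) = ⁅f, z k⁆ := fun k => by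
    show (Fd ^ (k + 1)) v = ⁅f, (Fd ^ k) v⁆
    rw [pow_succ', Module.End.mul_apply, toEnd_apply_apply]
  have hysucc : ∀ k, y (k + 1) = ⁅f, y k⁆ := fun k => by
    show (Fd ^ (k + 1)) c = ⁅f, (Fd ^ k) c⁆
    rw [pow_succ', Module.End.mul_apply, toEnd_apply_apply]
  have hzh : ∀ k : ℕ, ⁅h, z k⁆ = ((n : F) - 2 * k) • z k := fun k => P.lie_h_pow_toEnd_f k
  have hze : ∀ k : ℕ, ⁅e, z (k + 1)⁆ = (((k : F) + 1) * ((n : F) - (k : F))) • z k :=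
    fun k => P.lie_e_pow_succ_toEnd_f k
  have hzne : ∀ k : ℕ, k ≤ n → z k ≠ 0 := fun k hk => P.pow_toEnd_f_ne_zero_of_eq_nat rfl hk
  have hztop : z (n + 1) = 0 := P.pow_toEnd_f_eq_zero_of_eq_nat rfl
  have hztail : ∀ k : ℕ, n + 1 ≤ k → z k = 0 := by
    intro k hk
    obtain ⟨j, rfl⟩ := Nat.exists_eq_add_of_le hk
    have hzz : z (n + 1 + j) = (Fd ^ j) (z (n + 1)) := by
      show (Fd ^ (n + 1 + j)) v = (Fd ^ j) ((Fd ^ (n + 1)) v)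
      rw [show n + 1 + j = j + (n + 1) by omega, pow_add, Module.End.mul_apply]
    rw [hzz, hztop, map_zero]
  have hyh : ∀ k : ℕ, ⁅h, y k⁆ = ((n : F) - 2 * k) • y k + z k := by
    intro k
    induction k with
    | zero =>
      have hy0 : y 0 = c := by show (Fd ^ 0) c = c; rw [pow_zero, Module.End.one_apply]
      have hz0 : z 0 = v := by show (Fd ^ 0) v = v; rw [pow_zero, Module.End.one_apply]
      rw [hy0, hz0, hch]
      norm_num
    | succ k ih =>
      rw [hysucc, leibniz_lie, t.lie_lie_smul_f F, ih, hzsucc, lie_add, lie_smul, neg_lie,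
        smul_lie]
      push_cast
      module
  have hye : ∀ k : ℕ, ⁅e, y (k + 1)⁆ =
      (((k : F) + 1) * ((n : F) - (k : F))) • y k + ((k : F) + 1) • z k := by
    intro k
    induction k with
    | zero =>
      have hy0 : y 0 = c := by show (Fd ^ 0) c = c; rw [pow_zero, Module.End.one_apply]
      have hz0 : z 0 = v := by show (Fd ^ 0) v = v; rw [pow_zero, Module.End.one_apply]
      rw [hysucc, hy0, hz0, leibniz_lie, t.lie_e_f, hce, lie_zero, add_zero, hch]
      norm_num
    | succ k ih =>
      rw [hysucc (k + 1), leibniz_lie, t.lie_e_f, hyh (k + 1), ih, lie_add, lie_smul, lie_smul,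
        ← hysucc, ← hzsucc]
      push_cast
      match_scalars <;> ring
  by_cases hy0 : y (n + 1) = 0
  · have h1 := hye n
    rw [hy0, lie_zero, sub_self, mul_zero, zero_smul, zero_add] at h1
    exact hzne n le_rfl ((smul_eq_zero.mp h1.symm).resolve_left (Nat.cast_add_one_ne_zero n))
  · have hterm : ∃ j, y (n + 1 + j) = 0 := by
      apply chain_terminates h ((n : F) - 2 * (n + 1)) (-2) (by norm_num) (fun j => y (n + 1 + j))
      intro j
      rw [hyh (n + 1 + j), hztail (n + 1 + j) (by omega), add_zero]
      congr 1
      push_cast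
      ring
    set j₀ := Nat.find hterm with hj₀
    have hj₀spec : y (n + 1 + j₀) = 0 := Nat.find_spec hterm
    have hj₀0 : j₀ ≠ 0 := by
      intro hh
      rw [hh, add_zero] at hj₀spec
      exact hy0 hj₀spec
    set K := n + j₀ with hK
    have hKn : n + 1 ≤ K := by omega
    have hyK1 : y (K + 1) = 0 := by rwa [show K + 1 = n + 1 + j₀ by omega]
    have hyK : y K ≠ 0 := by
      have hmin := Nat.find_min hterm (m := j₀ - 1) (by omega)
      rwa [show K = n + 1 + (j₀ - 1) by omega]
    have hyKh : ⁅h, y K⁆ = ((n : F) - 2 * K) • y K := by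
      rw [hyh, hztail K hKn, add_zero]
    have P2 : IsSl2Triple.HasPrimitiveVectorWith t.symm (y K) ((2 * K - n : ℕ) : F) := by
      refine ⟨hyK, ?_, ?_⟩
      · rw [neg_lie, hyKh, ← neg_smul]
        congr 1
        rw [Nat.cast_sub (by omega)]
        push_cast
        ring
      · rw [← hysucc, hyK1]
    have book : ∀ j : ℕ, j ≤ K → ∃ α β : F, (E ^ j) (y K) = α • y (K - j) + β • z (K - j) := by
      intro j
      induction j with
      | zero => exact fun _ => ⟨1, 0, by simp⟩
      | succ j ih =>
        intro hj
        obtain ⟨α, β, hab⟩ := ih (by omega)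
        set m := K - (j + 1) with hm
        have hidx : K - j = m + 1 := by omega
        refine ⟨α * (((m : F) + 1) * ((n : F) - (m : F))),
          α * ((m : F) + 1) + β * (((m : F) + 1) * ((n : F) - (m : F))), ?_⟩
        have hstep : (E ^ (j + 1)) (y K) = E ((E ^ j) (y K)) := by
          rw [pow_succ', Module.End.mul_apply]
        rw [hstep, hab, hidx, map_add, map_smul, map_smul, toEnd_apply_apply, toEnd_apply_apply,
          hye m, hze m]
        match_scalars <;> ring
    obtain ⟨α, β, hKK⟩ := book K le_rfl
    have hEK1 : (E ^ (K + 1)) (y K) = 0 := by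
      have hstep : (E ^ (K + 1)) (y K) = E ((E ^ K) (y K)) := by
        rw [pow_succ', Module.End.mul_apply]
      have hy0' : y 0 = c := by show (Fd ^ 0) c = c; rw [pow_zero, Module.End.one_apply]
      have hz0' : z 0 = v := by show (Fd ^ 0) v = v; rw [pow_zero, Module.End.one_apply]
      rw [hstep, hKK, Nat.sub_self, hy0', hz0', map_add, map_smul, map_smul,
        toEnd_apply_apply, toEnd_apply_apply, hce, hve, smul_zero, smul_zero, add_zero]
    exact P2.pow_toEnd_f_ne_zero_of_eq_nat rfl (by omega : K + 1 ≤ 2 * K - n) hEK1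

lemma no_order_two (s : ℕ) : ∀ (lam : F) (c v : g), v ≠ 0 → ⁅h, v⁆ = lam • v →
    ⁅h, c⁆ = lam • c + v → (E ^ s) v = 0 → False := by
  induction s with
  | zero => intro lam c v hv _ _ h0; exact hv (by simpa using h0)
  | succ s ih =>
    intro lam c v hv hvh hch h0
    by_cases hev : ⁅e, v⁆ = 0
    · have P : t.HasPrimitiveVectorWith v lam := ⟨hv, hvh, hev⟩
      obtain ⟨n, rfl⟩ := P.exists_nat
      have hEc : ⁅h, ⁅e, c⁆⁆ = ((n : F) + 2) • ⁅e, c⁆ := by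
        rw [leibniz_lie, t.lie_h_e_smul F, hch, smul_lie, lie_add, lie_smul, hev, add_zero,
          ← add_smul, add_comm]
      have hterm : ∃ r, (E ^ r) ⁅e, c⁆ = 0 := by
        apply chain_terminates h ((n : F) + 2) 2 two_ne_zero (fun r => (E ^ r) ⁅e, c⁆)
        intro j
        exact eigen_chain_e t hEc j
      obtain ⟨r, hr⟩ := hterm
      obtain ⟨c', hc'h, hc'e⟩ := correction t hev r c hch hr
      exact crux t hv hvh hev hc'h hc'e
    · refine ih (lam + 2) ⁅e, c⁆ ⁅e, v⁆ hev ?_ ?_ ?_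
      · rw [leibniz_lie, t.lie_h_e_smul F, hvh, smul_lie, lie_smul]
        module
      · rw [leibniz_lie, t.lie_h_e_smul F, hch, smul_lie, lie_add, lie_smul]
        module
      · have hev' : ⁅e, v⁆ = E v := (toEnd_apply_apply F g g e v).symm
        rw [hev', ← Module.End.mul_apply, ← pow_succ]
        exact h0

end Aux

/-- on `g_{1/2}` (the `1/2`-eigenspace of `ad x`), the bilinear form
`⟨a|b⟩ = -(f|[a,b])` is skewsymmetric and nondegenerate. -/
theorem neutral_form_on_half_eigenspace_nondegenerate
    {F : Type*} [Field F] [CharZero F]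
    {g : Type*} [LieRing g] [LieAlgebra F g] [Module.Finite F g]
    [LieAlgebra.IsSimple F g]
    (e x f : g)
    (hxe : ⁅x, e⁆ = e) (hxf : ⁅x, f⁆ = -f) (hef : ⁅e, f⁆ = (2 : F) • x)
    (B : LinearMap.BilinForm F g)
    (hBsymm : ∀ a b : g, B a b = B b a)
    (hBinv : ∀ a b c : g, B ⁅a, b⁆ c = B a ⁅b, c⁆)
    (hBnd : B.Nondegenerate) :
    (∀ a b : g,
      a ∈ Module.End.eigenspace (LieAlgebra.ad F g x) ((1 : F) / 2) →
      b ∈ Module.End.eigenspace (LieAlgebra.ad F g x) ((1 : F) / 2) →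
      -(B f ⁅a, b⁆) = B f ⁅b, a⁆) ∧
    (∀ a ∈ Module.End.eigenspace (LieAlgebra.ad F g x) ((1 : F) / 2),
      (∀ b ∈ Module.End.eigenspace (LieAlgebra.ad F g x) ((1 : F) / 2),
        -(B f ⁅a, b⁆) = 0) → a = 0) := by
  constructor
  · intro a b _ _
    rw [← lie_skew a b, map_neg, neg_neg]
  · intro a ha hab
    have ha' : ⁅x, a⁆ = ((1 : F) / 2) • a := by
      rw [Module.End.mem_eigenspace_iff] at ha
      rwa [LieAlgebra.ad_apply] at ha
    by_cases hx0 : x = 0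
    · rw [hx0, zero_lie] at ha'
      exact ((smul_eq_zero.mp ha'.symm).resolve_left (by norm_num))
    · set hh : g := (2 : F) • x with hhdef
      have t : IsSl2Triple hh e f := by
        refine ⟨?_, by rw [hhdef]; exact hef, ?_, ?_⟩
        · intro hcon
          exact hx0 ((smul_eq_zero.mp hcon).resolve_left two_ne_zero)
        · rw [hhdef, smul_lie, hxe, two_smul]
          exact (two_smul ℕ e).symm
        · rw [hhdef, smul_lie, hxf, smul_neg, two_smul]
          exact congrArg Neg.neg (two_smul ℕ f).symm
      have hha : ⁅hh, a⁆ = a := by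
        rw [hhdef, smul_lie, ha', smul_smul]
        norm_num
      set u : g := ⁅f, a⁆ with hu
      have hub : ∀ b ∈ Module.End.eigenspace (LieAlgebra.ad F g x) ((1 : F) / 2),
          B u b = 0 := by
        intro b hb
        have h2 : B u b = B f ⁅a, b⁆ := hBinv f a b
        rw [h2]
        exact neg_eq_zero.mp (hab b hb)
      have hux : ⁅x, u⁆ = -(((1 : F) / 2) • u) := by
        rw [hu, leibniz_lie, hxf, ha', lie_smul, neg_lie]
        module
      have hurange : ∀ cc : g, B u (⁅x, cc⁆ - ((1 : F) / 2) • cc) = 0 := by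
        intro cc
        have h1 : B ⁅u, x⁆ cc = B u ⁅x, cc⁆ := hBinv u x cc
        have h2 : ⁅u, x⁆ = ((1 : F) / 2) • u := by
          have h3 := lie_skew u x
          rw [← h3, hux]
          module
        rw [map_sub, map_smul, ← h1, h2, LinearMap.map_smul₂]
        simp
      set T : g →ₗ[F] g := (LieAlgebra.ad F g x : g →ₗ[F] g) - ((1 : F) / 2) • LinearMap.id
        with hT
      have hTapp : ∀ z : g, T z = ⁅x, z⁆ - ((1 : F) / 2) • z := by
        intro z
        simp [hT, LieAlgebra.ad_apply]
      have hker : ∀ z : g, z ∈ LinearMap.ker T ↔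
          z ∈ Module.End.eigenspace (LieAlgebra.ad F g x) ((1 : F) / 2) := by
        intro z
        rw [LinearMap.mem_ker, Module.End.mem_eigenspace_iff, hTapp, sub_eq_zero,
          LieAlgebra.ad_apply]
      have hdisj : LinearMap.ker T ⊓ LinearMap.range T = ⊥ := by
        rw [eq_bot_iff]
        intro w hw
        obtain ⟨hwk, hwr⟩ := Submodule.mem_inf.mp hw
        obtain ⟨cc, hwc⟩ := hwr
        rw [Submodule.mem_bot]
        by_contra hw0
        have hwx : ⁅x, w⁆ = ((1 : F) / 2) • w := by
          have hthis : T w = 0 := hwk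
          rw [hTapp, sub_eq_zero] at hthis
          exact hthis
        have hccx : ⁅x, cc⁆ = w + ((1 : F) / 2) • cc := by
          rw [hTapp] at hwc
          rw [← hwc]
          abel
        have hwh2 : ⁅hh, (2 : F) • w⁆ = (1 : F) • ((2 : F) • w) := by
          rw [hhdef, smul_lie, lie_smul, hwx]
          module
        have hch : ⁅hh, cc⁆ = (1 : F) • cc + (2 : F) • w := by
          rw [hhdef, smul_lie, hccx]
          module
        have hw20 : (2 : F) • w ≠ 0 := by
          intro hcon
          exact hw0 ((smul_eq_zero.mp hcon).resolve_left two_ne_zero)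
        have hterm : ∃ s, ((LieModule.toEnd F g g e) ^ s) ((2 : F) • w) = 0 := by
          apply chain_terminates hh (1 : F) (2 : F) two_ne_zero
            (fun s => ((LieModule.toEnd F g g e) ^ s) ((2 : F) • w))
          intro j
          exact eigen_chain_e t hwh2 j
        obtain ⟨s, hs⟩ := hterm
        exact absurd (no_order_two t s 1 cc ((2 : F) • w) hw20 hwh2 hch hs) not_false
      have hcompl : LinearMap.ker T ⊔ LinearMap.range T = ⊤ := by
        apply Submodule.eq_top_of_finrank_eq
        have h1 := Submodule.finrank_sup_add_finrank_inf_eq (LinearMap.ker T)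
          (LinearMap.range T)
        rw [hdisj, finrank_bot, add_zero] at h1
        have h2 := LinearMap.finrank_range_add_finrank_ker T
        omega
      have hu0 : u = 0 := by
        apply hBnd.1
        intro w
        have hw : w ∈ LinearMap.ker T ⊔ LinearMap.range T := by
          rw [hcompl]
          exact Submodule.mem_top
        obtain ⟨k, hk, r, hr, rfl⟩ := Submodule.mem_sup.mp hw
        obtain ⟨cc, rfl⟩ := hr
        rw [map_add, hub k ((hker k).mp hk), zero_add, hTapp]
        exact hurange cc
      by_contra ha0
      have Pa : IsSl2Triple.HasPrimitiveVectorWith t.symm a (-1 : F) := by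
        refine ⟨ha0, ?_, ?_⟩
        · rw [neg_lie, hha]
          module
        · rw [← hu, hu0]
      obtain ⟨m, hm⟩ := Pa.exists_nat
      have hm1 : ((m + 1 : ℕ) : F) = 0 := by
        push_cast
        rw [← hm]
        ring
      exact Nat.cast_ne_zero.mpr (Nat.succ_ne_zero m) hm1
end
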